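/- Let F be a field with char F = 2, let α₁,β₁,β₂ ∈ F, and let A = A_{4,2}(α₁,β₁,β₂) = [[α₁, 1, 1, 0],[β₁, β₂, 1+α₁, 1]]. Then the invertible 2×2 matrices g over F with gA = A(g⊗g) are exactly the two matrices I₂ and [[1,0],[1+β₂,1]]; moreover, if β₂ ≠ 1 the only 2×2 matrix D with DA = A(D⊗I₂ + I₂⊗D) is 0, and if β₂ = 1 the matrices D with DA = A(D⊗I₂ + I₂⊗D) are exactly [[0,0],[c,0]] with c ∈ F. -/
import Mathlib


open Matrix Kronecker

/-- The matrix of structure constants (MSC) of a 2-dimensional algebra, as a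
`2 × (2 × 2)` matrix: the column indexed by `(j,k)` corresponds to the product
`e_j · e_k`, so the columns in order `(0,0), (0,1), (1,0), (1,1)` carry the
entries `α₁ α₂ α₃ α₄` (first row) and `β₁ β₂ β₃ β₄` (second row). -/
def MSC {F : Type*} [Field F] (a1 a2 a3 a4 b1 b2 b3 b4 : F) :
    Matrix (Fin 2) (Fin 2 × Fin 2) F :=
  Matrix.of fun i j => !![a1, a2, a3, a4; b1, b2, b3, b4] i (finProdFinEquiv j)

/-- `g` is an automorphism matrix of the algebra with MSC `A`:
`g` is invertible and `g • A = A • (g ⊗ g)`. -/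
def IsAutoMat {F : Type*} [Field F] (A : Matrix (Fin 2) (Fin 2 × Fin 2) F)
    (g : Matrix (Fin 2) (Fin 2) F) : Prop :=
  IsUnit g ∧ g * A = A * (g ⊗ₖ g)

/-- `D` is a derivation matrix of the algebra with MSC `A`:
`D • A = A • (D ⊗ I + I ⊗ D)`. -/
def IsDerMat {F : Type*} [Field F] (A : Matrix (Fin 2) (Fin 2 × Fin 2) F)
    (D : Matrix (Fin 2) (Fin 2) F) : Prop :=
  D * A = A * (D ⊗ₖ (1 : Matrix (Fin 2) (Fin 2) F) + (1 : Matrix (Fin 2) (Fin 2) F) ⊗ₖ D)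

theorem stmt_16 {F : Type*} [Field F] (hch : ringChar F = 2)
    (a1 b1 b2 : F)
    (A : Matrix (Fin 2) (Fin 2 × Fin 2) F)
    (hA : A = MSC a1 1 1 0 b1 b2 (1 + a1) 1) :
    (∀ g : Matrix (Fin 2) (Fin 2) F,
      IsAutoMat A g ↔ g = 1 ∨ g = !![1, 0; 1 + b2, 1]) ∧
    (b2 ≠ 1 → ∀ D : Matrix (Fin 2) (Fin 2) F, IsDerMat A D ↔ D = 0) ∧
    (b2 = 1 → ∀ D : Matrix (Fin 2) (Fin 2) F,
      IsDerMat A D ↔ ∃ c : F, D = !![0, 0; c, 0]) := by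
  have h2 : (2 : F) = 0 := by
    have h := ringChar.Nat.cast_ringChar (R := F)
    rw [hch] at h; exact_mod_cast h
  have p00 : finProdFinEquiv ((0:Fin 2),(0:Fin 2)) = (0 : Fin 4) := rfl
  have p01 : finProdFinEquiv ((0:Fin 2),(1:Fin 2)) = (1 : Fin 4) := rfl
  have p10 : finProdFinEquiv ((1:Fin 2),(0:Fin 2)) = (2 : Fin 4) := rfl
  have p11 : finProdFinEquiv ((1:Fin 2),(1:Fin 2)) = (3 : Fin 4) := rfl
  subst hA
  refine ⟨?_, ?_, ?_⟩
  · intro g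
    constructor
    · rintro ⟨hu, heq⟩
      have hdet : g 0 0 * g 1 1 - g 0 1 * g 1 0 ≠ 0 := by
        have h := (Matrix.isUnit_iff_isUnit_det g).mp hu
        rw [Matrix.det_fin_two] at h
        exact h.ne_zero
      have EE := Matrix.ext_iff.mpr heq
      have E00 := EE 0 (0,0); have E01 := EE 0 (0,1)
      have E02 := EE 0 (1,0); have E03 := EE 0 (1,1)
      have E10 := EE 1 (0,0); have E11 := EE 1 (0,1)
      have E12 := EE 1 (1,0); have E13 := EE 1 (1,1)
      simp only [MSC, Matrix.mul_apply, Fintype.sum_prod_type, Fin.sum_univ_two,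
        Fin.mk_zero, Fin.mk_one, p00, p01, p10, p11, Matrix.kroneckerMap_apply, Matrix.cons_val_two, Matrix.cons_val_three, Matrix.tail_cons, Equiv.coe_fn_mk, Matrix.of_apply,
        Matrix.cons_val', Matrix.cons_val_zero, Matrix.cons_val_one, Matrix.head_cons,
        Matrix.head_fin_const, Matrix.empty_val', Matrix.cons_val_fin_one, Fin.isValue,
        mul_one, mul_zero, one_mul, zero_mul, add_zero, zero_add] at E00 E01 E02 E03 E10 E11 E12 E13
      have hb : g 0 1 = 0 := by
        by_contra hb
        have key1 : g 0 1 * (b2 - (1 + a1)) = 0 := by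
          linear_combination (1) * E01 + (1) * E02 + ((-1) * ((g 0 1)) + (-1) * ((g 0 1) * a1) + (1) * ((g 0 1) * (g 1 0)) + (-1) * ((g 0 0)) + (1) * ((g 0 0) * (g 1 1)) + (1) * ((g 0 0) * (g 0 1) * a1)) * h2
        have hb2 : b2 = 1 + a1 := by
          rcases mul_eq_zero.mp key1 with h | h
          · exact absurd h hb
          · exact sub_eq_zero.mp h
        have key2 : g 0 1 * (g 0 1 * a1 - 1) = 0 := by
          linear_combination (1) * E03 + ((-1) * ((g 0 1)) + (1) * ((g 0 1) * (g 1 1)) + (1) * ((g 0 1) * (g 0 1) * a1)) * h2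
        have hbal : g 0 1 * a1 = 1 := by
          rcases mul_eq_zero.mp key2 with h | h
          · exact absurd h hb
          · linear_combination h
        have hb1e : g 0 1 * g 0 1 * b1 = g 0 0 - g 0 0 * g 0 0 := by
          linear_combination ((g 0 1)) * E00 + ((g 0 0)) * hbal + ((g 0 0) * (g 0 0)) * hbal + ((-1) * ((g 0 0) * (g 0 1) * a1) + (1) * ((g 0 0) * (g 0 1) * (g 1 0)) + (1) * ((g 0 0) * (g 0 0))) * h2
        have hde : g 1 1 - g 1 1 * g 1 1 = g 0 0 - g 0 0 * g 0 0 := by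
          linear_combination (1) * E13 + ((g 0 1) * (g 1 1)) * hb2 + (1) * hb1e + ((1) * ((g 0 1) * (g 1 1)) + (1) * ((g 0 1) * (g 1 1) * a1)) * h2
        have hce : g 0 1 * g 1 0 = g 0 1 + 1 - g 0 0 * g 1 1 := by
          linear_combination (1) * E01 + (1) * hbal + ((g 0 0)) * hbal + ((g 0 1)) * hb2 + ((-1) * ((g 0 1) * b2) + (1) * ((g 0 1) * (g 1 0)) + (1) * ((g 0 0) * (g 1 1))) * h2
        have key6 : g 0 1 * (g 0 1 - 1) = 0 := by
          linear_combination ((g 0 1) * (g 0 1)) * E10 + ((g 0 1) * (g 1 0)) * hbal + ((g 0 0) * (g 0 1) * (g 0 1) * (g 1 0)) * hb2 + ((g 1 1) * (g 1 1)) * hb1e + ((g 0 0)) * hb1e + ((g 0 1) * (g 0 1) * b1) * hde + ((g 0 0)) * hde + ((g 0 1)) * hce + ((g 0 1) * (g 1 0)) * hce + ((g 0 0) * (g 1 1)) * hce + ((1) * ((g 0 1) * (g 1 0)) + (1) * ((g 0 1) * (g 0 1)) + (-1) * ((g 0 1) * (g 0 1) * (g 1 1) * b1) + (-1) * ((g 0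 1) * (g 0 1) * (g 1 0) * a1) + (1) * ((g 0 0) * (g 1 1) * (g 1 1)) + (-1) * ((g 0 0) * (g 0 1) * (g 1 0) * (g 1 1)) + (1) * ((g 0 0) * (g 0 1) * (g 0 1) * (g 1 0)) + (1) * ((g 0 0) * (g 0 1) * (g 0 1) * (g 1 0) * a1) + (1) * ((g 0 0) * (g 0 0)) + (-1) * ((g 0 0) * (g 0 0) * (g 1 1) * (g 1 1)) + (-1) * ((g 0 0) * (g 0 0) * (g 0 0))) * h2
        have hbone : g 0 1 = 1 := by
          rcases mul_eq_zero.mp key6 with h | h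
          · exact absurd h hb
          · linear_combination h
        apply hdet
        linear_combination (1) * hce + (1) * hbone + ((1) * (1) + (-1) * ((g 0 1) * (g 1 0))) * h2
      have ha0 : g 0 0 ≠ 0 := by
        intro h; apply hdet; rw [h, hb]; ring
      have hd0 : g 1 1 ≠ 0 := by
        intro h; apply hdet; rw [h, hb]; ring
      have hd1 : g 1 1 = 1 := by
        have keyd : g 0 0 * (1 - g 1 1) = 0 := by
          linear_combination (1) * E01 + (b2) * hb + ((g 1 0)) * hb + ((g 0 0) * a1) * hb + ((-1) * ((g 0 1) * b2)) * h2
        rcases mul_eq_zero.mp keyd with h | h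
        · exact absurd h ha0
        · linear_combination -h
      have ha1' : g 0 0 = 1 := by
        have h13 : (1 - g 0 0) * (1 + a1) = 0 := by
          linear_combination (1) * E12 + ((g 1 0) * b2) * hb + ((g 0 0) * b1) * hb + (1) * hd1 + (a1) * hd1 + ((g 1 0)) * hd1 + ((g 0 0)) * hd1 + ((g 0 0) * a1) * hd1 + ((1) * (1) + (1) * (a1) + (-1) * ((g 1 1)) + (-1) * ((g 1 1) * a1)) * h2
        have h00 : g 0 0 * a1 * (1 - g 0 0) = 0 := by
          linear_combination (1) * E00 + (b1) * hb + ((-1) * ((g 0 1) * b1) + (1) * ((g 0 0) * (g 1 0))) * h2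
        rcases mul_eq_zero.mp h13 with h | hal
        · linear_combination -h
        · have keya : g 0 0 * (1 - g 0 0) = 0 := by
            linear_combination (1) * h00 + ((g 0 0)) * hal + ((g 0 0) * (g 0 0)) * hal + ((-1) * ((g 0 0) * a1) + (-1) * ((g 0 0) * (g 0 0))) * h2
          rcases mul_eq_zero.mp keya with h | h
          · exact absurd h ha0
          · linear_combination -h
      have hcc : g 1 0 * (g 1 0 - (1 + b2)) = 0 := by
        linear_combination (1) * E10 + (b1) * hd1 + (b1) * ha1' + ((g 1 0)) * ha1' + ((g 1 0) * b2) * ha1' + ((g 1 0) * a1) * ha1' + ((g 0 0) * b1) * ha1' + ((1) * (b1) + (-1) * ((g 1 1) * b1) + (1) * ((g 1 0) * (g 1 0))) * h2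
      rcases mul_eq_zero.mp hcc with h | h
      · left
        rw [Matrix.eta_fin_two g, ha1', hb, h, hd1]
        exact Matrix.one_fin_two.symm
      · right
        rw [Matrix.eta_fin_two g, ha1', hb, sub_eq_zero.mp h, hd1]
    · rintro (rfl | rfl)
      · exact ⟨isUnit_one, by rw [Matrix.one_kronecker_one, Matrix.one_mul, Matrix.mul_one]⟩
      · constructor
        · rw [Matrix.isUnit_iff_isUnit_det, Matrix.det_fin_two_of]
          simp
        · ext i jk
          fin_cases i <;> fin_cases jk <;>
            simp only [MSC, Matrix.mul_apply, Fintype.sum_prod_type, Fin.sum_univ_two,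
              Fin.mk_zero, Fin.mk_one, p00, p01, p10, p11, Matrix.kroneckerMap_apply, Matrix.cons_val_two, Matrix.cons_val_three, Matrix.tail_cons, Equiv.coe_fn_mk, Matrix.of_apply,
              Matrix.cons_val', Matrix.cons_val_zero, Matrix.cons_val_one, Matrix.head_cons,
              Matrix.head_fin_const, Matrix.empty_val', Matrix.cons_val_fin_one, Fin.isValue,
              mul_one, mul_zero, one_mul, zero_mul, add_zero, zero_add] <;>
            (first
              | ring1
              | linear_combination (-1 - b2) * h2
              | linear_combination (-1 - 2*b2 - b2*b2) * h2)
  · intro hb2 D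
    constructor
    · intro hder
      have heq : D * MSC a1 1 1 0 b1 b2 (1 + a1) 1 = MSC a1 1 1 0 b1 b2 (1 + a1) 1 * (D ⊗ₖ (1 : Matrix (Fin 2) (Fin 2) F) + (1 : Matrix (Fin 2) (Fin 2) F) ⊗ₖ D) := hder
      have EE := Matrix.ext_iff.mpr heq
      have ED00 := EE 0 (0,0); have ED02 := EE 0 (1,0); have ED03 := EE 0 (1,1)
      have ED10 := EE 1 (0,0); have ED12 := EE 1 (1,0)
      simp only [MSC, Matrix.mul_apply, Fintype.sum_prod_type, Fin.sum_univ_two,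
        Fin.mk_zero, Fin.mk_one, p00, p01, p10, p11, Matrix.kroneckerMap_apply, Matrix.cons_val_two, Matrix.cons_val_three, Matrix.tail_cons, Matrix.add_apply, Matrix.one_apply,
        Equiv.coe_fn_mk, Matrix.of_apply,
        Matrix.cons_val', Matrix.cons_val_zero, Matrix.cons_val_one, Matrix.head_cons,
        Matrix.head_fin_const, Matrix.empty_val', Matrix.cons_val_fin_one, Fin.isValue,
        if_true, if_false, reduceIte, Fin.reduceEq, ite_true, ite_false,
        mul_one, mul_zero, one_mul, zero_mul, add_zero, zero_add] at ED00 ED02 ED03 ED10 ED12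
      have hbD : D 0 1 = 0 := by
        linear_combination (1) * ED03 + ((1) * ((D 0 1))) * h2
      have hdD : D 1 1 = 0 := by
        linear_combination (1) * ED02 + (1) * hbD + ((1) * ((D 1 1)) + (-1) * ((D 0 1))) * h2
      have haD : D 0 0 = 0 := by
        linear_combination (1) * ED00 + (1) * ED12 + ((1) * ((D 1 0)) + (1) * ((D 0 0)) + (1) * ((D 0 0) * a1)) * h2
      have hcD : D 1 0 * (b2 - 1) = 0 := by
        linear_combination (1) * ED10 + (b1) * hdD + ((-1) * ((D 1 1) * b1) + (1) * ((D 1 0) * b2) + (1) * ((D 0 0) * b1)) * h2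
      have hc0 : D 1 0 = 0 := by
        rcases mul_eq_zero.mp hcD with h | h
        · exact h
        · exact absurd (sub_eq_zero.mp h) hb2
      ext i j
      fin_cases i <;> fin_cases j <;> simp [haD, hbD, hcD, hdD, hc0]
    · rintro rfl
      show (0 : Matrix (Fin 2) (Fin 2) F) * _ = _ * _
      rw [Matrix.zero_kronecker, Matrix.kronecker_zero, add_zero, Matrix.zero_mul, Matrix.mul_zero]
  · intro hb2 D
    constructor
    · intro hder
      have heq : D * MSC a1 1 1 0 b1 b2 (1 + a1) 1 = MSC a1 1 1 0 b1 b2 (1 + a1) 1 * (D ⊗ₖ (1 : Matrix (Fin 2) (Fin 2) F) + (1 : Matrix (Fin 2) (Fin 2) F) ⊗ₖ D) := hder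
      have EE := Matrix.ext_iff.mpr heq
      have ED00 := EE 0 (0,0); have ED02 := EE 0 (1,0); have ED03 := EE 0 (1,1)
      have ED12 := EE 1 (1,0)
      simp only [MSC, Matrix.mul_apply, Fintype.sum_prod_type, Fin.sum_univ_two,
        Fin.mk_zero, Fin.mk_one, p00, p01, p10, p11, Matrix.kroneckerMap_apply, Matrix.cons_val_two, Matrix.cons_val_three, Matrix.tail_cons, Matrix.add_apply, Matrix.one_apply,
        Equiv.coe_fn_mk, Matrix.of_apply,
        Matrix.cons_val', Matrix.cons_val_zero, Matrix.cons_val_one, Matrix.head_cons,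
        Matrix.head_fin_const, Matrix.empty_val', Matrix.cons_val_fin_one, Fin.isValue,
        if_true, if_false, reduceIte, Fin.reduceEq, ite_true, ite_false,
        mul_one, mul_zero, one_mul, zero_mul, add_zero, zero_add] at ED00 ED02 ED03 ED12
      have hbD : D 0 1 = 0 := by
        linear_combination (1) * ED03 + ((1) * ((D 0 1))) * h2
      have hdD : D 1 1 = 0 := by
        linear_combination (1) * ED02 + (1) * hbD + ((1) * ((D 1 1)) + (-1) * ((D 0 1))) * h2
      have haD : D 0 0 = 0 := by
        linear_combination (1) * ED00 + (1) * ED12 + ((1) * ((D 1 0)) + (1) * ((D 0 0)) + (1) * ((D 0 0) * a1)) * h2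
      refine ⟨D 1 0, ?_⟩
      conv_lhs => rw [Matrix.eta_fin_two D, haD, hbD, hdD]
    · rintro ⟨c, rfl⟩
      show _ * _ = _ * _
      ext i jk
      fin_cases i <;> fin_cases jk <;>
        simp only [MSC, Matrix.mul_apply, Fintype.sum_prod_type, Fin.sum_univ_two,
          Fin.mk_zero, Fin.mk_one, p00, p01, p10, p11, Matrix.kroneckerMap_apply, Matrix.cons_val_two, Matrix.cons_val_three, Matrix.tail_cons, Matrix.add_apply, Matrix.one_apply,
          Equiv.coe_fn_mk, Matrix.of_apply,
          Matrix.cons_val', Matrix.cons_val_zero, Matrix.cons_val_one, Matrix.head_cons,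
          Matrix.head_fin_const, Matrix.empty_val', Matrix.cons_val_fin_one, Fin.isValue,
          if_true, if_false, reduceIte, Fin.reduceEq, ite_true, ite_false,
          mul_one, mul_zero, one_mul, zero_mul, add_zero, zero_add] <;>
        (first
          | ring1
          | linear_combination (-c) * h2
          | linear_combination (-c) * hb2 + (-c) * h2)
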